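/- Let X, Θ, Y be separable real Hilbert spaces, U = X × Θ with norm ‖(x,θ)‖_U² = ‖x‖_X² + ‖θ‖_Θ², F : U → Y Lipschitz with constant L, and E : U → Y Lipschitz with constant at most R with ‖E(0)‖_Y ≤ B. For Borel probability measures ν, ν' on U with finite second moments, define the risk R_ν(E) = ∫ ‖F(u) − E(u)‖_Y² dν(u), the 2-Wasserstein distance W₂(ν,ν') as the infimum over all couplings γ of ν and ν' of (∫ ‖u − v‖_U² dγ)^{1/2}, and c(ν,ν') = C₁² √(2(∫‖u‖_U² dν + ∫‖u‖_U² dν')) + 2C₁C₂ where C₁ = L + R and C₂ = ‖F(0)‖_Y + B. Then R_{ν'}(E) ≤ R_ν(E) + c(ν,ν') · W₂(ν,ν'). -/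

import Mathlib

open MeasureTheory
open scoped ENNReal NNReal

noncomputable section

/-- The Hilbert norm on the product `U = X × Θ`: `‖(x, θ)‖_U = √(‖x‖² + ‖θ‖²)`. -/
def nU {X Θ : Type*} [NormedAddCommGroup X] [NormedAddCommGroup Θ] (u : X × Θ) : ℝ :=
  Real.sqrt (‖u.1‖ ^ 2 + ‖u.2‖ ^ 2)

/-- The 2-Wasserstein distance associated with a cost function `d`: the infimum over all
couplings `γ` of `μ` and `μ'` (i.e. probability measures on the product whose marginals are
`μ` and `μ'`) of `(∫ d(u,v)² dγ)^{1/2}`. -/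
def W2 {α : Type*} [MeasurableSpace α] (d : α → α → ℝ) (μ μ' : Measure α) : ℝ :=
  sInf { r : ℝ | ∃ γ : Measure (α × α), IsProbabilityMeasure γ ∧
      γ.map Prod.fst = μ ∧ γ.map Prod.snd = μ' ∧
      r = Real.sqrt (∫ p, d p.1 p.2 ^ 2 ∂γ) }

/-- The squared-error risk `R_ν(E) = ∫ ‖F(u) - E(u)‖² dν(u)`. -/
def risk {X Θ Y : Type*} [NormedAddCommGroup X] [NormedAddCommGroup Θ] [NormedAddCommGroup Y]
    [MeasurableSpace X] [MeasurableSpace Θ] (F E : X × Θ → Y) (ν : Measure (X × Θ)) : ℝ :=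
  ∫ u, ‖F u - E u‖ ^ 2 ∂ν

/-- The hypothesis class `H`: all maps `E : U → Y` that are Lipschitz with constant at most
`R₀` (with respect to the Hilbert product norm on `U`) and satisfy `‖E 0‖ ≤ B`. -/
def Hclass {X Θ Y : Type*} [NormedAddCommGroup X] [NormedAddCommGroup Θ] [NormedAddCommGroup Y]
    (R₀ B : ℝ) : Set (X × Θ → Y) :=
  { E | (∀ u v, ‖E u - E v‖ ≤ R₀ * nU (u - v)) ∧ ‖E 0‖ ≤ B }

/-- The constant `c(ν,ν') = C₁² √(2(∫‖u‖_U² dν + ∫‖u‖_U² dν')) + 2 C₁ C₂`, where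
`C₁ = L + R₀` and `C₂ = ‖F 0‖ + B`. -/
def cShift {X Θ Y : Type*} [NormedAddCommGroup X] [NormedAddCommGroup Θ] [NormedAddCommGroup Y]
    [MeasurableSpace X] [MeasurableSpace Θ] (L R₀ B : ℝ) (F : X × Θ → Y)
    (ν ν' : Measure (X × Θ)) : ℝ :=
  (L + R₀) ^ 2 * Real.sqrt (2 * ((∫ u, nU u ^ 2 ∂ν) + ∫ u, nU u ^ 2 ∂ν'))
    + 2 * (L + R₀) * (‖F 0‖ + B)

/-- The bound objective `J(ν) = inf_{E ∈ H} R_ν(E) + c(ν, ν_dep) W₂(ν, ν_dep)`, where the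
Wasserstein distance on `U = X × Θ` is taken with respect to the Hilbert product norm. -/
def Jobj {X Θ Y : Type*} [NormedAddCommGroup X] [NormedAddCommGroup Θ] [NormedAddCommGroup Y]
    [MeasurableSpace X] [MeasurableSpace Θ] (L R₀ B : ℝ) (F : X × Θ → Y)
    (νdep ν : Measure (X × Θ)) : ℝ :=
  sInf ((fun E => risk F E ν) '' Hclass R₀ B)
    + cShift L R₀ B F ν νdep * W2 (fun u v => nU (u - v)) ν νdep

section helpers

variable {X Θ : Type*} [NormedAddCommGroup X] [NormedAddCommGroup Θ]

lemma nU_eq_norm (u : X × Θ) : nU u = ‖(WithLp.equiv 2 (X × Θ)).symm u‖ := by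
  rw [WithLp.prod_norm_eq_of_L2]; rfl

lemma nU_nonneg (u : X × Θ) : 0 ≤ nU u := Real.sqrt_nonneg _

lemma nU_zero : nU (0 : X × Θ) = 0 := by simp [nU]

lemma nU_sq (u : X × Θ) : nU u ^ 2 = ‖u.1‖ ^ 2 + ‖u.2‖ ^ 2 :=
  Real.sq_sqrt (by positivity)

lemma nU_add_le (u v : X × Θ) : nU (u + v) ≤ nU u + nU v := by
  have h : (WithLp.equiv 2 (X × Θ)).symm (u + v) = (WithLp.equiv 2 (X × Θ)).symm u + (WithLp.equiv 2 (X × Θ)).symm v := rfl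
  simp only [nU_eq_norm, h]
  exact norm_add_le _ _

lemma nU_neg (u : X × Θ) : nU (-u) = nU u := by simp [nU]

lemma nU_sub_rev (u v : X × Θ) : nU (u - v) = nU (v - u) := by
  rw [← nU_neg (u - v), neg_sub]

lemma nU_sub_le (u v : X × Θ) : nU (u - v) ≤ nU u + nU v := by
  rw [sub_eq_add_neg]
  calc nU (u + -v) ≤ nU u + nU (-v) := nU_add_le u (-v)
    _ = nU u + nU v := by rw [nU_neg]

lemma nU_continuous : Continuous (nU : X × Θ → ℝ) := by
  unfold nU
  exact Real.continuous_sqrt.comp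
    ((continuous_fst.norm.pow 2).add (continuous_snd.norm.pow 2))

lemma nU_le_add (u : X × Θ) : nU u ≤ ‖u.1‖ + ‖u.2‖ := by
  have h1 : ‖u.1‖ ^ 2 + ‖u.2‖ ^ 2 ≤ (‖u.1‖ + ‖u.2‖) ^ 2 := by
    nlinarith [norm_nonneg u.1, norm_nonneg u.2]
  calc nU u ≤ Real.sqrt ((‖u.1‖ + ‖u.2‖) ^ 2) := Real.sqrt_le_sqrt h1
    _ = ‖u.1‖ + ‖u.2‖ := Real.sqrt_sq (by positivity)

open MeasureTheory in
lemma integral_mul_le_sqrt_mul_sqrt {α : Type*} [MeasurableSpace α] {μ : Measure α}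
    [IsProbabilityMeasure μ] {f g : α → ℝ} (hf0 : ∀ x, 0 ≤ f x) (hg0 : ∀ x, 0 ≤ g x)
    (hfm : AEStronglyMeasurable f μ) (hgm : AEStronglyMeasurable g μ)
    (hf2 : Integrable (fun x => f x ^ 2) μ) (hg2 : Integrable (fun x => g x ^ 2) μ) :
    ∫ x, f x * g x ∂μ ≤ Real.sqrt (∫ x, f x ^ 2 ∂μ) * Real.sqrt (∫ x, g x ^ 2 ∂μ) := by
  have hpq : (2 : ℝ).HolderConjugate 2 := Real.HolderConjugate.two_two
  have h2 : ENNReal.ofReal (2 : ℝ) = 2 := by norm_num [ENNReal.ofReal_ofNat]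
  have hfmem : MeasureTheory.MemLp f (ENNReal.ofReal (2:ℝ)) μ := by
    rw [h2]; exact (memLp_two_iff_integrable_sq hfm).2 hf2
  have hgmem : MeasureTheory.MemLp g (ENNReal.ofReal (2:ℝ)) μ := by
    rw [h2]; exact (memLp_two_iff_integrable_sq hgm).2 hg2
  have h := MeasureTheory.integral_mul_le_Lp_mul_Lq_of_nonneg hpq
    (Filter.Eventually.of_forall hf0) (Filter.Eventually.of_forall hg0) hfmem hgmem
  simp only [Real.rpow_two] at h
  calc ∫ x, f x * g x ∂μ
      ≤ (∫ x, f x ^ 2 ∂μ) ^ (1 / (2:ℝ)) * (∫ x, g x ^ 2 ∂μ) ^ (1 / (2:ℝ)) := h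
    _ = Real.sqrt (∫ x, f x ^ 2 ∂μ) * Real.sqrt (∫ x, g x ^ 2 ∂μ) := by
        rw [Real.sqrt_eq_rpow, Real.sqrt_eq_rpow]

end helpers

variable {X Θ Y : Type*}
  [NormedAddCommGroup X] [InnerProductSpace ℝ X] [CompleteSpace X]
  [SecondCountableTopology X] [MeasurableSpace X] [BorelSpace X]
  [NormedAddCommGroup Θ] [InnerProductSpace ℝ Θ] [CompleteSpace Θ]
  [SecondCountableTopology Θ] [MeasurableSpace Θ] [BorelSpace Θ]
  [NormedAddCommGroup Y] [InnerProductSpace ℝ Y] [CompleteSpace Y]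
  [SecondCountableTopology Y]

set_option maxHeartbeats 2000000 in
/-- **Lemma 1, risk-shift bound.**
`R_{ν'}(E) ≤ R_ν(E) + c(ν,ν') · W₂(ν,ν')`. -/
theorem risk_shift (F E : X × Θ → Y) (L R B : ℝ)
    (hF : ∀ u v : X × Θ, ‖F u - F v‖ ≤ L * nU (u - v))
    (hE : ∀ u v : X × Θ, ‖E u - E v‖ ≤ R * nU (u - v))
    (hE0 : ‖E 0‖ ≤ B)
    (ν ν' : Measure (X × Θ)) [IsProbabilityMeasure ν] [IsProbabilityMeasure ν']
    (hν : Integrable (fun u => nU u ^ 2) ν) (hν' : Integrable (fun u => nU u ^ 2) ν') :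
    risk F E ν' ≤ risk F E ν + cShift L R B F ν ν' * W2 (fun u v => nU (u - v)) ν ν' := by
  classical
  set C1 := L + R with hC1def
  set C2 := ‖F 0‖ + B with hC2def
  set G : X × Θ → Y := fun u => F u - E u with hGdef
  have hG_lip : ∀ u v, ‖G u - G v‖ ≤ C1 * nU (u - v) := by
    intro u v
    have heq : G u - G v = (F u - F v) - (E u - E v) := by
      simp only [hGdef]; abel
    calc ‖G u - G v‖ ≤ ‖F u - F v‖ + ‖E u - E v‖ := by
          rw [heq]; exact norm_sub_le _ _
      _ ≤ L * nU (u - v) + R * nU (u - v) := add_le_add (hF u v) (hE u v)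
      _ = C1 * nU (u - v) := by rw [hC1def]; ring
  have hG0 : ‖G 0‖ ≤ C2 := by
    calc ‖G 0‖ = ‖F 0 - E 0‖ := rfl
      _ ≤ ‖F 0‖ + ‖E 0‖ := norm_sub_le _ _
      _ ≤ C2 := by rw [hC2def]; linarith
  have hGval : ∀ u, ‖G u‖ ≤ C2 + C1 * nU u := by
    intro u
    calc ‖G u‖ = ‖(G u - G 0) + G 0‖ := by rw [sub_add_cancel]
      _ ≤ ‖G u - G 0‖ + ‖G 0‖ := norm_add_le _ _
      _ ≤ C1 * nU (u - 0) + C2 := add_le_add (hG_lip u 0) hG0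
      _ = C2 + C1 * nU u := by rw [sub_zero]; ring
  by_cases hdeg : ∀ u : X × Θ, u = 0
  · -- degenerate case: the whole space is trivial
    have hrisk : risk F E ν' = risk F E ν := by
      unfold risk
      have h1 : (fun u : X × Θ => ‖F u - E u‖ ^ 2) = fun _ => ‖F 0 - E 0‖ ^ 2 :=
        funext fun u => by rw [hdeg u]
      rw [h1, integral_const, integral_const]
      simp
    have hmem : (0 : ℝ) ∈ { r : ℝ | ∃ γ : Measure ((X × Θ) × (X × Θ)),
        IsProbabilityMeasure γ ∧ γ.map Prod.fst = ν ∧ γ.map Prod.snd = ν' ∧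
        r = Real.sqrt (∫ p, (fun u v => nU (u - v)) p.1 p.2 ^ 2 ∂γ) } := by
      refine ⟨ν.prod ν', inferInstance, by simp, by simp, ?_⟩
      have h0 : (fun p : (X × Θ) × (X × Θ) => (fun u v => nU (u - v)) p.1 p.2 ^ 2)
          = fun _ => (0:ℝ) := funext fun p => by
        simp only [hdeg (p.1 - p.2), nU_zero]; ring
      rw [h0]
      simp
    have hW : W2 (fun u v : X × Θ => nU (u - v)) ν ν' = 0 := by
      unfold W2
      refine le_antisymm (csInf_le ⟨0, ?_⟩ hmem) (le_csInf ⟨0, hmem⟩ ?_)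
      · rintro r ⟨γ, _, _, _, rfl⟩; exact Real.sqrt_nonneg _
      · rintro r ⟨γ, _, _, _, rfl⟩; exact Real.sqrt_nonneg _
    rw [hrisk, hW, mul_zero, add_zero]
  · -- main case
    push_neg at hdeg
    obtain ⟨u0, hu0⟩ := hdeg
    have hnu0 : 0 < nU u0 := by
      have hne : u0.1 ≠ 0 ∨ u0.2 ≠ 0 := by
        by_contra h
        push_neg at h
        exact hu0 (Prod.ext h.1 h.2)
      have hpos : 0 < ‖u0.1‖ ^ 2 + ‖u0.2‖ ^ 2 := by
        rcases hne with h | h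
        · have := norm_pos_iff.2 h; nlinarith [sq_nonneg ‖u0.2‖]
        · have := norm_pos_iff.2 h; nlinarith [sq_nonneg ‖u0.1‖]
      exact Real.sqrt_pos.2 hpos
    have hL : 0 ≤ L := by
      have h := hF u0 0
      rw [sub_zero] at h
      nlinarith [norm_nonneg (F u0 - F 0)]
    have hR : 0 ≤ R := by
      have h := hE u0 0
      rw [sub_zero] at h
      nlinarith [norm_nonneg (E u0 - E 0)]
    have hB : 0 ≤ B := le_trans (norm_nonneg _) hE0
    have hC1 : 0 ≤ C1 := by rw [hC1def]; linarith
    have hC2 : 0 ≤ C2 := by rw [hC2def]; positivity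
    -- continuity
    have hLipCont : ∀ (H : X × Θ → Y) (K : ℝ), 0 ≤ K →
        (∀ u v, ‖H u - H v‖ ≤ K * nU (u - v)) → Continuous H := by
      intro H K hK hH
      have : LipschitzWith (Real.toNNReal (2 * K)) H := by
        apply LipschitzWith.of_dist_le_mul
        intro u v
        rw [dist_eq_norm, Real.coe_toNNReal _ (by positivity)]
        calc ‖H u - H v‖ ≤ K * nU (u - v) := hH u v
          _ ≤ K * (‖(u - v).1‖ + ‖(u - v).2‖) :=
              mul_le_mul_of_nonneg_left (nU_le_add _) hK
          _ ≤ K * (dist u v + dist u v) := by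
              have h1 : ‖(u - v).1‖ ≤ dist u v := by
                rw [show (u - v).1 = u.1 - v.1 from rfl, ← dist_eq_norm]
                rw [Prod.dist_eq]; exact le_max_left _ _
              have h2 : ‖(u - v).2‖ ≤ dist u v := by
                rw [show (u - v).2 = u.2 - v.2 from rfl, ← dist_eq_norm]
                rw [Prod.dist_eq]; exact le_max_right _ _
              have := add_le_add h1 h2
              exact mul_le_mul_of_nonneg_left this hK
          _ = 2 * K * dist u v := by ring
      exact this.continuous
    have hFc : Continuous F := hLipCont F L hL hF
    have hEc : Continuous E := hLipCont E R hR hE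
    have hGc : Continuous G := hFc.sub hEc
    have hnUc : Continuous (nU : X × Θ → ℝ) := nU_continuous
    -- the key estimate for an arbitrary coupling
    have key : ∀ γ : Measure ((X × Θ) × (X × Θ)), IsProbabilityMeasure γ →
        γ.map Prod.fst = ν → γ.map Prod.snd = ν' →
        risk F E ν' ≤ risk F E ν
          + cShift L R B F ν ν' * Real.sqrt (∫ p, nU (p.1 - p.2) ^ 2 ∂γ) := by
      intro γ hγp hγ1 hγ2
      set d : (X × Θ) × (X × Θ) → ℝ := fun p => nU (p.1 - p.2) with hddef
      have hdc : Continuous d := hnUc.comp (continuous_fst.sub continuous_snd)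
      have hd0 : ∀ p, 0 ≤ d p := fun p => nU_nonneg _
      have hd_le : ∀ p : (X × Θ) × (X × Θ), d p ≤ nU p.1 + nU p.2 :=
        fun p => nU_sub_le p.1 p.2
      -- integrability of the marginal second moments
      have hn1 : Integrable (fun p : (X × Θ) × (X × Θ) => nU p.1 ^ 2) γ := by
        have hν1 := hν
        rw [← hγ1] at hν1
        exact (integrable_map_measure ((hnUc.pow 2).aestronglyMeasurable)
          measurable_fst.aemeasurable).1 hν1
      have hn2 : Integrable (fun p : (X × Θ) × (X × Θ) => nU p.2 ^ 2) γ := by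
        have hν2 := hν'
        rw [← hγ2] at hν2
        exact (integrable_map_measure ((hnUc.pow 2).aestronglyMeasurable)
          measurable_snd.aemeasurable).1 hν2
      have hm1 : ∫ u, nU u ^ 2 ∂ν = ∫ p, nU p.1 ^ 2 ∂γ := by
        rw [← hγ1]
        exact integral_map measurable_fst.aemeasurable ((hnUc.pow 2).aestronglyMeasurable)
      have hm2 : ∫ u, nU u ^ 2 ∂ν' = ∫ p, nU p.2 ^ 2 ∂γ := by
        rw [← hγ2]
        exact integral_map measurable_snd.aemeasurable ((hnUc.pow 2).aestronglyMeasurable)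
      -- integrability facts
      have hd2 : Integrable (fun p => d p ^ 2) γ := by
        apply Integrable.mono' ((hn1.add hn2).const_mul 2)
        · exact (hdc.pow 2).aestronglyMeasurable
        · filter_upwards with p
          simp only [Pi.add_apply]
          rw [Real.norm_of_nonneg (sq_nonneg _)]
          nlinarith [hd_le p, hd0 p, nU_nonneg p.1, nU_nonneg p.2,
            mul_le_mul (hd_le p) (hd_le p) (hd0 p) (add_nonneg (nU_nonneg p.1) (nU_nonneg p.2)),
            sq_nonneg (nU p.1 - nU p.2)]
      have hd1 : Integrable d γ := by
        apply Integrable.mono' (hd2.add (integrable_const 1))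
        · exact hdc.aestronglyMeasurable
        · filter_upwards with p
          simp only [Pi.add_apply]
          rw [Real.norm_of_nonneg (hd0 p)]
          nlinarith [hd0 p]
      have hg1' : Integrable (fun p : (X × Θ) × (X × Θ) => ‖G p.1‖ ^ 2) γ := by
        apply Integrable.mono' ((integrable_const (2 * C2 ^ 2)).add (hn1.const_mul (2 * C1 ^ 2)))
        · exact ((hGc.comp continuous_fst).norm.pow 2).aestronglyMeasurable
        · filter_upwards with p
          simp only [Pi.add_apply]
          rw [Real.norm_of_nonneg (sq_nonneg _)]
          nlinarith [mul_le_mul (hGval p.1) (hGval p.1) (norm_nonneg (G p.1))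
              (add_nonneg hC2 (mul_nonneg hC1 (nU_nonneg p.1))),
            sq_nonneg (C2 - C1 * nU p.1)]
      have hg2' : Integrable (fun p : (X × Θ) × (X × Θ) => ‖G p.2‖ ^ 2) γ := by
        apply Integrable.mono' ((integrable_const (2 * C2 ^ 2)).add (hn2.const_mul (2 * C1 ^ 2)))
        · exact ((hGc.comp continuous_snd).norm.pow 2).aestronglyMeasurable
        · filter_upwards with p
          simp only [Pi.add_apply]
          rw [Real.norm_of_nonneg (sq_nonneg _)]
          nlinarith [mul_le_mul (hGval p.2) (hGval p.2) (norm_nonneg (G p.2))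
              (add_nonneg hC2 (mul_nonneg hC1 (nU_nonneg p.2))),
            sq_nonneg (C2 - C1 * nU p.2)]
      have hcross : Integrable (fun p : (X × Θ) × (X × Θ) => d p * (nU p.1 + nU p.2)) γ := by
        apply Integrable.mono' (hd2.add ((hn1.add hn2).const_mul 2))
        · exact (hdc.mul ((hnUc.comp continuous_fst).add (hnUc.comp continuous_snd))).aestronglyMeasurable
        · filter_upwards with p
          simp only [Pi.add_apply]
          rw [Real.norm_of_nonneg (mul_nonneg (hd0 p) (add_nonneg (nU_nonneg _) (nU_nonneg _)))]
          nlinarith [sq_nonneg (d p - (nU p.1 + nU p.2)), nU_nonneg p.1, nU_nonneg p.2,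
            sq_nonneg (nU p.1 - nU p.2)]
      have hsum2 : Integrable (fun p : (X × Θ) × (X × Θ) => (nU p.1 + nU p.2) ^ 2) γ := by
        apply Integrable.mono' ((hn1.add hn2).const_mul 2)
        · exact (((hnUc.comp continuous_fst).add (hnUc.comp continuous_snd)).pow 2).aestronglyMeasurable
        · filter_upwards with p
          simp only [Pi.add_apply]
          rw [Real.norm_of_nonneg (sq_nonneg _)]
          nlinarith [sq_nonneg (nU p.1 - nU p.2)]
      -- rewriting the risks as integrals over the coupling
      have hr1 : risk F E ν = ∫ p, ‖G p.1‖ ^ 2 ∂γ := by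
        show (∫ u, ‖F u - E u‖ ^ 2 ∂ν) = _
        rw [← hγ1, integral_map (f := fun u => ‖F u - E u‖ ^ 2) measurable_fst.aemeasurable
          (((hFc.sub hEc).norm.pow 2).aestronglyMeasurable)]
      have hr2 : risk F E ν' = ∫ p, ‖G p.2‖ ^ 2 ∂γ := by
        show (∫ u, ‖F u - E u‖ ^ 2 ∂ν') = _
        rw [← hγ2, integral_map (f := fun u => ‖F u - E u‖ ^ 2) measurable_snd.aemeasurable
          (((hFc.sub hEc).norm.pow 2).aestronglyMeasurable)]
      -- pointwise bound
      have hpt : ∀ p : (X × Θ) × (X × Θ), ‖G p.2‖ ^ 2 - ‖G p.1‖ ^ 2 ≤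
          (2 * C1 * C2) * d p + C1 ^ 2 * (d p * (nU p.1 + nU p.2)) := by
        intro p
        have h1 : ‖G p.2‖ - ‖G p.1‖ ≤ C1 * d p := by
          have hlip := hG_lip p.2 p.1
          rw [nU_sub_rev p.2 p.1] at hlip
          calc ‖G p.2‖ - ‖G p.1‖ ≤ ‖G p.2 - G p.1‖ := norm_sub_norm_le _ _
            _ ≤ C1 * d p := hlip
        have h2 : ‖G p.1‖ + ‖G p.2‖ ≤ 2 * C2 + C1 * (nU p.1 + nU p.2) := by
          have ha := hGval p.1
          have hb := hGval p.2
          linarith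
        have hC1d : 0 ≤ C1 * d p := mul_nonneg hC1 (hd0 p)
        have hsum : 0 ≤ ‖G p.1‖ + ‖G p.2‖ := by positivity
        calc ‖G p.2‖ ^ 2 - ‖G p.1‖ ^ 2
            = (‖G p.2‖ - ‖G p.1‖) * (‖G p.1‖ + ‖G p.2‖) := by ring
          _ ≤ (C1 * d p) * (‖G p.1‖ + ‖G p.2‖) := mul_le_mul_of_nonneg_right h1 hsum
          _ ≤ (C1 * d p) * (2 * C2 + C1 * (nU p.1 + nU p.2)) :=
              mul_le_mul_of_nonneg_left h2 hC1d
          _ = (2 * C1 * C2) * d p + C1 ^ 2 * (d p * (nU p.1 + nU p.2)) := by ring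
      -- integrate the pointwise bound
      have hIineq : risk F E ν' - risk F E ν ≤
          (2 * C1 * C2) * (∫ p, d p ∂γ) + C1 ^ 2 * ∫ p, d p * (nU p.1 + nU p.2) ∂γ := by
        rw [hr1, hr2, ← integral_sub hg2' hg1']
        calc ∫ p, (‖G p.2‖ ^ 2 - ‖G p.1‖ ^ 2) ∂γ
            ≤ ∫ p, ((2 * C1 * C2) * d p + C1 ^ 2 * (d p * (nU p.1 + nU p.2))) ∂γ :=
              integral_mono (hg2'.sub hg1')
                ((hd1.const_mul _).add (hcross.const_mul _)) hpt
          _ = (2 * C1 * C2) * (∫ p, d p ∂γ)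
              + C1 ^ 2 * ∫ p, d p * (nU p.1 + nU p.2) ∂γ := by
              rw [integral_add (hd1.const_mul _) (hcross.const_mul _),
                integral_const_mul, integral_const_mul]
      set r := Real.sqrt (∫ p, d p ^ 2 ∂γ) with hrdef
      have hr_nonneg : 0 ≤ r := Real.sqrt_nonneg _
      -- Cauchy–Schwarz twice
      have hcs1 : ∫ p, d p ∂γ ≤ r := by
        have h := integral_mul_le_sqrt_mul_sqrt hd0 (fun _ => zero_le_one)
          hdc.aestronglyMeasurable aestronglyMeasurable_const hd2
          (by simpa using (integrable_const (1:ℝ)))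
        have e1 : ∫ p, d p * 1 ∂γ = ∫ p, d p ∂γ := by simp
        have e2 : ∫ _p : (X × Θ) × (X × Θ), (1:ℝ) ^ 2 ∂γ = 1 := by simp
        rw [e1, e2, Real.sqrt_one, mul_one] at h
        exact h
      have hcs2 : ∫ p, d p * (nU p.1 + nU p.2) ∂γ ≤
          r * Real.sqrt (2 * ((∫ u, nU u ^ 2 ∂ν) + ∫ u, nU u ^ 2 ∂ν')) := by
        have h := integral_mul_le_sqrt_mul_sqrt hd0
          (fun p => add_nonneg (nU_nonneg p.1) (nU_nonneg p.2))
          hdc.aestronglyMeasurable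
          ((hnUc.comp continuous_fst).add (hnUc.comp continuous_snd)).aestronglyMeasurable
          hd2 hsum2
        refine h.trans ?_
        apply mul_le_mul_of_nonneg_left _ hr_nonneg
        apply Real.sqrt_le_sqrt
        have hmono : ∫ p, (nU p.1 + nU p.2) ^ 2 ∂γ
            ≤ ∫ p, (2 * nU p.1 ^ 2 + 2 * nU p.2 ^ 2) ∂γ := by
          apply integral_mono hsum2 ((hn1.const_mul 2).add (hn2.const_mul 2))
          intro p
          simp only [Pi.add_apply]
          nlinarith [sq_nonneg (nU p.1 - nU p.2)]
        rw [integral_add (hn1.const_mul 2) (hn2.const_mul 2),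
          integral_const_mul, integral_const_mul] at hmono
        rw [hm1, hm2]
        linarith
      -- put everything together
      have hfinal : risk F E ν' ≤ risk F E ν +
          ((2 * C1 * C2) * r + C1 ^ 2 *
            (r * Real.sqrt (2 * ((∫ u, nU u ^ 2 ∂ν) + ∫ u, nU u ^ 2 ∂ν')))) := by
        have t1 : (2 * C1 * C2) * (∫ p, d p ∂γ) ≤ (2 * C1 * C2) * r :=
          mul_le_mul_of_nonneg_left hcs1 (by positivity)
        have t2 : C1 ^ 2 * (∫ p, d p * (nU p.1 + nU p.2) ∂γ) ≤
            C1 ^ 2 * (r * Real.sqrt (2 * ((∫ u, nU u ^ 2 ∂ν) + ∫ u, nU u ^ 2 ∂ν'))) :=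
          mul_le_mul_of_nonneg_left hcs2 (sq_nonneg _)
        linarith
      have hcsh : cShift L R B F ν ν' * r = (2 * C1 * C2) * r + C1 ^ 2 *
          (r * Real.sqrt (2 * ((∫ u, nU u ^ 2 ∂ν) + ∫ u, nU u ^ 2 ∂ν'))) := by
        unfold cShift
        rw [← hC1def, ← hC2def]
        ring
      rw [hcsh]
      exact hfinal
    -- pass to the infimum over couplings
    have hc : 0 ≤ cShift L R B F ν ν' := by
      unfold cShift
      rw [← hC1def, ← hC2def]
      exact add_nonneg (mul_nonneg (sq_nonneg _) (Real.sqrt_nonneg _))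
        (mul_nonneg (mul_nonneg zero_le_two hC1) hC2)
    unfold W2
    set S := { r : ℝ | ∃ γ : Measure ((X × Θ) × (X × Θ)), IsProbabilityMeasure γ ∧
        γ.map Prod.fst = ν ∧ γ.map Prod.snd = ν' ∧
        r = Real.sqrt (∫ p, (fun u v : X × Θ => nU (u - v)) p.1 p.2 ^ 2 ∂γ) } with hSdef
    have hne : S.Nonempty :=
      ⟨_, ν.prod ν', inferInstance, by simp, by simp, rfl⟩
    have hub : ∀ s ∈ S, risk F E ν' ≤ risk F E ν + cShift L R B F ν ν' * s := by
      rintro s ⟨γ, hγp, h1, h2, rfl⟩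
      exact key γ hγp h1 h2
    rcases eq_or_lt_of_le hc with hceq | hcpos
    · obtain ⟨s, hs⟩ := hne
      have h := hub s hs
      rw [← hceq, zero_mul, add_zero] at h ⊢
      exact h
    · have hlow : (risk F E ν' - risk F E ν) / cShift L R B F ν ν' ≤ sInf S := by
        apply le_csInf hne
        intro s hs
        rw [div_le_iff₀ hcpos]
        have := hub s hs
        linarith [mul_comm s (cShift L R B F ν ν')]
      have := (div_le_iff₀ hcpos).1 hlow
      nlinarith [this]
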